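/- In ℝ², let K := {(x₁,x₂) ∈ ℝ² : x₁² + x₂² ≤ 1 and x₂ ≤ 5|x₁|} and Ω := B₂ ∖ K. Let s ∈ (0,1) be such that Per_s(K,ℝ²) > Per_s(B₁,ℝ²). Then Per_s(B₁,Ω) < min{ Per_s(K,Ω), Per_s(B₂,Ω) }. -/

import Mathlib

open MeasureTheory Filter
open scoped ENNReal NNReal

noncomputable section

/-- The fractional kernel `|x - y| ^ (-n - s)`. -/
def fracKernel (n : ℕ) (s : ℝ) (x y : EuclideanSpace ℝ (Fin n)) : ℝ :=
  dist x y ^ (-(n : ℝ) - s)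

/-- The cross-shaped domain `Q(Ω) = (ℝⁿ × ℝⁿ) \ (𝒞Ω × 𝒞Ω)`. -/
def crossQ (n : ℕ) (Ω : Set (EuclideanSpace ℝ (Fin n))) :
    Set (EuclideanSpace ℝ (Fin n) × EuclideanSpace ℝ (Fin n)) :=
  (Ωᶜ ×ˢ Ωᶜ)ᶜ

/-- The fractional `s`-perimeter `Per_s(E, Ω)` of `E` in `Ω`. -/
def fracPer (n : ℕ) (s : ℝ) (E Ω : Set (EuclideanSpace ℝ (Fin n))) : ℝ≥0∞ :=
  (1 / 2) * ∫⁻ p in crossQ n Ω,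
    ENNReal.ofReal
      (|Set.indicator E (fun _ => (1 : ℝ)) p.1 - Set.indicator E (fun _ => (1 : ℝ)) p.2| *
        fracKernel n s p.1 p.2)

/-- The set `K = {x₁² + x₂² ≤ 1 and x₂ ≤ 5|x₁|} ⊆ ℝ²`. -/
def Kset : Set (EuclideanSpace ℝ (Fin 2)) :=
  {x | x 0 ^ 2 + x 1 ^ 2 ≤ 1 ∧ x 1 ≤ 5 * |x 0|}

/-- The open unit ball `B₁ ⊆ ℝ²` centered at the origin. -/
def Bone : Set (EuclideanSpace ℝ (Fin 2)) := Metric.ball 0 1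

/-- The open ball `B₂ ⊆ ℝ²` of radius `2` centered at the origin. -/
def Btwo : Set (EuclideanSpace ℝ (Fin 2)) := Metric.ball 0 2

/-- The open set `Ω = B₂ \ K`. -/
def Ωex : Set (EuclideanSpace ℝ (Fin 2)) := Btwo \ Kset

/-! ### Auxiliary material -/

abbrev E2 := EuclideanSpace ℝ (Fin 2)

/-- The integrand of the fractional perimeter. -/
def fint (s : ℝ) (E : Set E2) : E2 × E2 → ℝ≥0∞ := fun p =>
  ENNReal.ofReal
    (|Set.indicator E (fun _ => (1 : ℝ)) p.1 - Set.indicator E (fun _ => (1 : ℝ)) p.2| *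
      fracKernel 2 s p.1 p.2)

lemma fracPer_eq (s : ℝ) (E Ω : Set E2) :
    fracPer 2 s E Ω = (1 / 2) * ∫⁻ p in crossQ 2 Ω, fint s E p := rfl

lemma measurable_fint (s : ℝ) {E : Set E2} (hE : MeasurableSet E) :
    Measurable (fint s E) := by
  apply Measurable.ennreal_ofReal
  apply Measurable.mul
  · exact (((measurable_const.indicator hE).comp measurable_fst).sub
      ((measurable_const.indicator hE).comp measurable_snd)).abs
  · have : Measurable fun p : E2 × E2 => dist p.1 p.2 := continuous_dist.measurable
    simpa [fracKernel] using this.pow (measurable_const : Measurable fun _ : E2 × E2 => -(2:ℝ) - s)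

lemma norm_E2 (x : E2) : ‖x‖ = Real.sqrt (x 0 ^ 2 + x 1 ^ 2) := by
  rw [EuclideanSpace.norm_eq]
  simp [Fin.sum_univ_two, Real.norm_eq_abs, sq_abs]

lemma norm_le_one_of_mem_Kset {x : E2} (hx : x ∈ Kset) : ‖x‖ ≤ 1 := by
  rw [norm_E2]
  have h1 := hx.1
  calc Real.sqrt (x 0 ^ 2 + x 1 ^ 2) ≤ Real.sqrt 1 := Real.sqrt_le_sqrt h1
    _ = 1 := Real.sqrt_one

lemma measurableSet_Kset : MeasurableSet Kset := by
  have h0 : Continuous fun x : E2 => x 0 := (EuclideanSpace.proj (0 : Fin 2) : E2 →L[ℝ] ℝ).continuous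
  have h1 : Continuous fun x : E2 => x 1 := (EuclideanSpace.proj (1 : Fin 2) : E2 →L[ℝ] ℝ).continuous
  have : Kset = {x : E2 | x 0 ^ 2 + x 1 ^ 2 ≤ 1} ∩ {x : E2 | x 1 ≤ 5 * |x 0|} := rfl
  rw [this]
  exact ((isClosed_le (((h0.pow 2)).add (h1.pow 2)) continuous_const).measurableSet).inter
    ((isClosed_le h1 (continuous_const.mul h0.abs)).measurableSet)

lemma measurableSet_Ωex : MeasurableSet Ωex :=
  measurableSet_ball.diff measurableSet_Kset

/-- Decomposition of the global perimeter. -/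
lemma decomp (s : ℝ) (E : Set E2) :
    fracPer 2 s E Set.univ
      = fracPer 2 s E Ωex + (1 / 2) * ∫⁻ p in Ωexᶜ ×ˢ Ωexᶜ, fint s E p := by
  have hq : crossQ 2 (Set.univ : Set E2) = Set.univ := by
    simp [crossQ]
  have hT : MeasurableSet (crossQ 2 Ωex) :=
    ((measurableSet_Ωex.compl.prod measurableSet_Ωex.compl)).compl
  rw [fracPer_eq, fracPer_eq, hq, Measure.restrict_univ,
    ← lintegral_add_compl (fint s E) hT, mul_add]
  congr 2
  simp [crossQ]

/-- On `Ωexᶜ`, away from the unit sphere, membership in `Bone` and `Kset` agree. -/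
lemma mem_iff_aux {x : E2} (hx : x ∈ Ωexᶜ) (hn : ‖x‖ ≠ 1) : x ∈ Bone ↔ x ∈ Kset := by
  constructor
  · intro hb
    have hlt : ‖x‖ < 1 := by simpa [Bone, mem_ball_zero_iff] using hb
    have hx2 : x ∈ Btwo := by
      simp only [Btwo, mem_ball_zero_iff]; linarith
    simp only [Ωex, Set.mem_compl_iff, Set.mem_diff, not_and, not_not] at hx
    exact hx hx2
  · intro hk
    have := norm_le_one_of_mem_Kset hk
    simp only [Bone, mem_ball_zero_iff]
    exact lt_of_le_of_ne this hn

lemma mem_iff_aux2 {x : E2} (hx : x ∈ Ωexᶜ) : x ∈ Btwo ↔ x ∈ Kset := by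
  constructor
  · intro hb
    simp only [Ωex, Set.mem_compl_iff, Set.mem_diff, not_and, not_not] at hx
    exact hx hb
  · intro hk
    have := norm_le_one_of_mem_Kset hk
    simp only [Btwo, mem_ball_zero_iff]; linarith

/-- The unit sphere slices are null in the product. -/
lemma ae_not_sphere :
    ∀ᵐ p : E2 × E2, ‖p.1‖ ≠ 1 ∧ ‖p.2‖ ≠ 1 := by
  have hs : (volume : Measure E2) (Metric.sphere 0 1) = 0 :=
    Measure.addHaar_sphere volume 0 1
  have h1 : (volume : Measure (E2 × E2)) ((Metric.sphere 0 1) ×ˢ (Set.univ : Set E2)) = 0 := by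
    rw [Measure.volume_eq_prod, Measure.prod_prod, hs, zero_mul]
  have h2 : (volume : Measure (E2 × E2)) ((Set.univ : Set E2) ×ˢ (Metric.sphere 0 1)) = 0 := by
    rw [Measure.volume_eq_prod, Measure.prod_prod, hs, mul_zero]
  have : (volume : Measure (E2 × E2))
      {p : E2 × E2 | ¬(‖p.1‖ ≠ 1 ∧ ‖p.2‖ ≠ 1)} = 0 := by
    refine measure_mono_null (fun p hp => ?_) (measure_union_null h1 h2)
    simp only [Set.mem_setOf_eq, not_and_or, not_not] at hp
    rcases hp with hp | hp
    · left; constructor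
      · simpa [Metric.mem_sphere, dist_zero_right] using hp
      · trivial
    · right; constructor
      · trivial
      · simpa [Metric.mem_sphere, dist_zero_right] using hp
  exact this

lemma tail_eq_K (s : ℝ) :
    ∫⁻ p in Ωexᶜ ×ˢ Ωexᶜ, fint s Bone p = ∫⁻ p in Ωexᶜ ×ˢ Ωexᶜ, fint s Kset p := by
  apply setLIntegral_congr_fun_ae (measurableSet_Ωex.compl.prod measurableSet_Ωex.compl)
  filter_upwards [ae_not_sphere] with p hp hmem
  have h1 : p.1 ∈ Bone ↔ p.1 ∈ Kset := mem_iff_aux hmem.1 hp.1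
  have h2 : p.2 ∈ Bone ↔ p.2 ∈ Kset := mem_iff_aux hmem.2 hp.2
  unfold fint
  have e1 : Set.indicator Bone (fun _ => (1:ℝ)) p.1 = Set.indicator Kset (fun _ => (1:ℝ)) p.1 := by
    by_cases h : p.1 ∈ Bone
    · rw [Set.indicator_of_mem h, Set.indicator_of_mem (h1.mp h)]
    · rw [Set.indicator_of_notMem h, Set.indicator_of_notMem (fun hc => h (h1.mpr hc))]
  have e2 : Set.indicator Bone (fun _ => (1:ℝ)) p.2 = Set.indicator Kset (fun _ => (1:ℝ)) p.2 := by
    by_cases h : p.2 ∈ Bone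
    · rw [Set.indicator_of_mem h, Set.indicator_of_mem (h2.mp h)]
    · rw [Set.indicator_of_notMem h, Set.indicator_of_notMem (fun hc => h (h2.mpr hc))]
  rw [e1, e2]

lemma tail_eq_B2 (s : ℝ) :
    ∫⁻ p in Ωexᶜ ×ˢ Ωexᶜ, fint s Btwo p = ∫⁻ p in Ωexᶜ ×ˢ Ωexᶜ, fint s Kset p := by
  apply setLIntegral_congr_fun_ae (measurableSet_Ωex.compl.prod measurableSet_Ωex.compl)
  filter_upwards with p hmem
  have h1 : p.1 ∈ Btwo ↔ p.1 ∈ Kset := mem_iff_aux2 hmem.1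
  have h2 : p.2 ∈ Btwo ↔ p.2 ∈ Kset := mem_iff_aux2 hmem.2
  unfold fint
  have e1 : Set.indicator Btwo (fun _ => (1:ℝ)) p.1 = Set.indicator Kset (fun _ => (1:ℝ)) p.1 := by
    by_cases h : p.1 ∈ Btwo
    · rw [Set.indicator_of_mem h, Set.indicator_of_mem (h1.mp h)]
    · rw [Set.indicator_of_notMem h, Set.indicator_of_notMem (fun hc => h (h1.mpr hc))]
  have e2 : Set.indicator Btwo (fun _ => (1:ℝ)) p.2 = Set.indicator Kset (fun _ => (1:ℝ)) p.2 := by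
    by_cases h : p.2 ∈ Btwo
    · rw [Set.indicator_of_mem h, Set.indicator_of_mem (h2.mp h)]
    · rw [Set.indicator_of_notMem h, Set.indicator_of_notMem (fun hc => h (h2.mpr hc))]
  rw [e1, e2]

/-- Scaling: `Per_s(B₂, ℝ²) = 16 · 2^{-2-s} · Per_s(B₁, ℝ²)`. -/
lemma scaling (s : ℝ) :
    fracPer 2 s Btwo Set.univ
      = ENNReal.ofReal (16 * (2 : ℝ) ^ (-(2:ℝ) - s)) * fracPer 2 s Bone Set.univ := by
  have hq : crossQ 2 (Set.univ : Set E2) = Set.univ := by simp [crossQ]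
  have hmeasB2 : Measurable (fint s Btwo) := measurable_fint s measurableSet_ball
  -- pointwise identity under scaling
  have hpt : ∀ p : E2 × E2, fint s Btwo ((2:ℝ) • p)
      = ENNReal.ofReal ((2:ℝ) ^ (-(2:ℝ) - s)) * fint s Bone p := by
    intro ⟨x, y⟩
    have hmem : ∀ z : E2, (2:ℝ) • z ∈ Btwo ↔ z ∈ Bone := by
      intro z
      simp only [Btwo, Bone, mem_ball_zero_iff, norm_smul, Real.norm_ofNat]
      constructor <;> intro h <;> linarith
    have e1 : Set.indicator Btwo (fun _ => (1:ℝ)) ((2:ℝ) • x)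
        = Set.indicator Bone (fun _ => (1:ℝ)) x := by
      by_cases h : x ∈ Bone
      · rw [Set.indicator_of_mem h, Set.indicator_of_mem ((hmem x).mpr h)]
      · rw [Set.indicator_of_notMem h, Set.indicator_of_notMem (fun hc => h ((hmem x).mp hc))]
    have e2 : Set.indicator Btwo (fun _ => (1:ℝ)) ((2:ℝ) • y)
        = Set.indicator Bone (fun _ => (1:ℝ)) y := by
      by_cases h : y ∈ Bone
      · rw [Set.indicator_of_mem h, Set.indicator_of_mem ((hmem y).mpr h)]
      · rw [Set.indicator_of_notMem h, Set.indicator_of_notMem (fun hc => h ((hmem y).mp hc))]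
    have hk : fracKernel 2 s ((2:ℝ) • x) ((2:ℝ) • y)
        = (2:ℝ) ^ (-(2:ℝ) - s) * fracKernel 2 s x y := by
      unfold fracKernel
      rw [dist_smul₀, Real.norm_ofNat,
        Real.mul_rpow (by norm_num) dist_nonneg]
      norm_num
    show fint s Btwo ((2:ℝ) • x, (2:ℝ) • y) = _
    unfold fint
    simp only [e1, e2, hk]
    rw [← ENNReal.ofReal_mul (by positivity)]
    congr 1
    ring
  -- change of variables
  have h4 : Module.finrank ℝ (E2 × E2) = 4 := by
    rw [Module.finrank_prod, finrank_euclideanSpace_fin]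
  haveI : (volume : Measure (E2 × E2)).IsAddHaarMeasure :=
    Measure.prod.instIsAddHaarMeasure (volume : Measure E2) (volume : Measure E2)
  have hmap : Measure.map (((2:ℝ)) • ·) (volume : Measure (E2 × E2))
      = ENNReal.ofReal |((2:ℝ) ^ Module.finrank ℝ (E2 × E2))⁻¹| • volume :=
    Measure.map_addHaar_smul volume two_ne_zero
  have hcv : ∫⁻ p : E2 × E2, fint s Btwo ((2:ℝ) • p)
      = ENNReal.ofReal (1/16) * ∫⁻ p, fint s Btwo p := by
    rw [← lintegral_map hmeasB2 (measurable_const_smul (2:ℝ)), hmap, lintegral_smul_measure]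
    congr 1
    rw [h4]
    norm_num
  have hlhs : ∫⁻ p : E2 × E2, fint s Btwo ((2:ℝ) • p)
      = ENNReal.ofReal ((2:ℝ) ^ (-(2:ℝ) - s)) * ∫⁻ p, fint s Bone p := by
    have hmB1 : MeasurableSet Bone := measurableSet_ball
    simp_rw [hpt]
    rw [lintegral_const_mul _ (measurable_fint s hmB1)]
  have key : ∫⁻ p, fint s Btwo p
      = ENNReal.ofReal 16 * (ENNReal.ofReal ((2:ℝ) ^ (-(2:ℝ) - s)) * ∫⁻ p, fint s Bone p) := by
    rw [← hlhs, hcv, ← mul_assoc, ← ENNReal.ofReal_mul (by norm_num)]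
    norm_num
  rw [fracPer_eq, fracPer_eq, hq, Measure.restrict_univ, key,
    ENNReal.ofReal_mul (by norm_num : (0:ℝ) ≤ 16)]
  ring

/-- Positivity of the global perimeter of `B₁`. -/
lemma pos_perim (s : ℝ) (hs : s ∈ Set.Ioo (0:ℝ) 1) : 0 < fracPer 2 s Bone Set.univ := by
  have hq : crossQ 2 (Set.univ : Set E2) = Set.univ := by simp [crossQ]
  rw [fracPer_eq, hq, Measure.restrict_univ]
  refine ENNReal.mul_pos (by norm_num) (ne_of_gt ?_)
  -- lower bound on a product of balls
  set y₀ : E2 := EuclideanSpace.single (0 : Fin 2) (2:ℝ) with hy₀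
  have hy₀n : ‖y₀‖ = 2 := by
    rw [hy₀, EuclideanSpace.norm_single]; norm_num
  set A : Set E2 := Metric.ball y₀ (1/2) with hA
  set c : ℝ := (4:ℝ) ^ (-(2:ℝ) - s) with hc
  have hcpos : 0 < c := Real.rpow_pos_of_pos (by norm_num) _
  have hbound : ∀ p ∈ Bone ×ˢ A, ENNReal.ofReal c ≤ fint s Bone p := by
    rintro ⟨x, y⟩ ⟨hx, hy⟩
    have hxn : ‖x‖ < 1 := by simpa [Bone, mem_ball_zero_iff] using hx
    have hyd : dist y y₀ < 1/2 := by simpa [A, Metric.mem_ball] using hy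
    have hyn : (3:ℝ)/2 ≤ ‖y‖ := by
      have := norm_sub_norm_le y₀ y
      have hdy : ‖y₀ - y‖ < 1/2 := by
        rw [← dist_eq_norm, dist_comm]; exact hyd
      rw [hy₀n] at this
      linarith
    have hyB : y ∉ Bone := by
      simp only [Bone, mem_ball_zero_iff, not_lt]
      linarith
    have hdxy : dist x y ≤ 4 := by
      have h1 : dist x y ≤ ‖x‖ + ‖y‖ := by
        rw [dist_eq_norm]
        exact (norm_sub_le x y)
      have h2 : ‖y‖ ≤ ‖y₀‖ + ‖y - y₀‖ := by
        have := norm_add_le y₀ (y - y₀)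
        simpa using this
      have h3 : ‖y - y₀‖ < 1/2 := by rw [← dist_eq_norm]; exact hyd
      rw [hy₀n] at h2
      linarith
    have hdpos : 0 < dist x y := by
      rw [dist_pos]
      intro h
      rw [h] at hxn
      linarith
    have hker : c ≤ fracKernel 2 s x y := by
      unfold fracKernel
      rw [hc]
      exact Real.rpow_le_rpow_of_nonpos hdpos hdxy (by linarith [hs.1])
    have hind : |Set.indicator Bone (fun _ => (1:ℝ)) x - Set.indicator Bone (fun _ => (1:ℝ)) y|
        = 1 := by
      rw [Set.indicator_of_mem hx, Set.indicator_of_notMem hyB]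
      norm_num
    show ENNReal.ofReal c ≤ fint s Bone (x, y)
    unfold fint
    apply ENNReal.ofReal_le_ofReal
    rw [hind, one_mul]
    exact hker
  have hS : MeasurableSet (Bone ×ˢ A) := measurableSet_ball.prod measurableSet_ball
  calc (0:ℝ≥0∞) < ENNReal.ofReal c * volume (Bone ×ˢ A) := by
        apply ENNReal.mul_pos (ENNReal.ofReal_pos.mpr hcpos).ne'
        rw [Measure.volume_eq_prod, Measure.prod_prod]
        exact (ENNReal.mul_pos (Metric.measure_ball_pos _ _ (by norm_num : (0:ℝ) < 1)).ne'
          (Metric.measure_ball_pos _ _ (by norm_num : (0:ℝ) < 1/2)).ne').ne'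
    _ = ∫⁻ _ in Bone ×ˢ A, ENNReal.ofReal c := (setLIntegral_const _ _).symm
    _ ≤ ∫⁻ p in Bone ×ˢ A, fint s Bone p :=
        setLIntegral_mono (measurable_fint s measurableSet_ball) hbound
    _ ≤ ∫⁻ p, fint s Bone p := setLIntegral_le_lintegral _ _

theorem sPerimeter_strict_comparison (s : ℝ) (hs : s ∈ Set.Ioo (0 : ℝ) 1)
    (hper : fracPer 2 s Bone Set.univ < fracPer 2 s Kset Set.univ) :
    fracPer 2 s Bone Ωex < min (fracPer 2 s Kset Ωex) (fracPer 2 s Btwo Ωex) := by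
  set C := (1 / 2 : ℝ≥0∞) * ∫⁻ p in Ωexᶜ ×ˢ Ωexᶜ, fint s Kset p with hC
  have hd1 : fracPer 2 s Bone Set.univ = fracPer 2 s Bone Ωex + C := by
    rw [decomp s Bone, tail_eq_K s]
  have hdK : fracPer 2 s Kset Set.univ = fracPer 2 s Kset Ωex + C := decomp s Kset
  have hd2 : fracPer 2 s Btwo Set.univ = fracPer 2 s Btwo Ωex + C := by
    rw [decomp s Btwo, tail_eq_B2 s]
  have hfin : fracPer 2 s Bone Set.univ ≠ ⊤ := hper.ne_top
  have hCfin : C ≠ ⊤ := by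
    intro h
    apply hfin
    rw [hd1, h, add_top]
  -- B₂ comparison
  have hpos := pos_perim s hs
  have hconst : (2:ℝ≥0∞) ≤ ENNReal.ofReal (16 * (2 : ℝ) ^ (-(2:ℝ) - s)) := by
    have h1 : (2:ℝ) ^ (-(3:ℝ)) ≤ (2:ℝ) ^ (-(2:ℝ) - s) :=
      Real.rpow_le_rpow_of_exponent_le (by norm_num) (by linarith [hs.2])
    have h2 : (2:ℝ) ^ (-(3:ℝ)) = 1/8 := by
      rw [Real.rpow_neg (by norm_num), show ((3:ℝ) = (3:ℕ)) by norm_num,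
        Real.rpow_natCast]
      norm_num
    rw [h2] at h1
    calc (2:ℝ≥0∞) = ENNReal.ofReal 2 := by norm_num
      _ ≤ _ := ENNReal.ofReal_le_ofReal (by nlinarith)
  have hB2 : fracPer 2 s Bone Set.univ < fracPer 2 s Btwo Set.univ := by
    rw [scaling s]
    calc fracPer 2 s Bone Set.univ = 1 * fracPer 2 s Bone Set.univ := (one_mul _).symm
      _ < 2 * fracPer 2 s Bone Set.univ := by
          rw [ENNReal.mul_lt_mul_iff_left hpos.ne' hfin]
          norm_num
      _ ≤ _ := mul_le_mul_left hconst _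
  -- conclude
  have hK' : fracPer 2 s Bone Ωex < fracPer 2 s Kset Ωex := by
    rw [hd1, hdK] at hper
    exact (ENNReal.add_lt_add_iff_right hCfin).mp hper
  have hB2' : fracPer 2 s Bone Ωex < fracPer 2 s Btwo Ωex := by
    rw [hd1, hd2] at hB2
    exact (ENNReal.add_lt_add_iff_right hCfin).mp hB2
  exact lt_min hK' hB2'

end
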